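/- arXiv:2208.05407 — 3 statements merged into one kernel-verified Lean document; each statement's English description precedes it below -/
import Mathlib

section
/- For a Euclidean simplex T ⊂ R^2 with facet lines a_i + b_i x + c_i y = 0 (i=1,2,3), let g be the 3×3 matrix with columns (a_i,b_i,c_i). If det(g) ≠ 0, then the normalized volume function Vol((T - (x,y))^∨) of the polar dual of the translated simplex equals ±det(g)/∏_i(a_i + b_i x + c_i y) for (x,y) in the interior of T. In particular, the rational function det(g)/∏_i(a_i+b_i x+c_i y) has constant sign on the interior of T. -/
open MeasureTheory Set

section AuxLemmas

private lemma threeCover' : ∀ i j k l : Fin 3, i ≠ j → i ≠ k → j ≠ k → l = i ∨ l = j ∨ l = k := by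
  decide

private def linAB' (A B C D : ℝ) : ℝ×ℝ →ₗ[ℝ] ℝ×ℝ where
  toFun u := (A*u.1 + B*u.2, C*u.1 + D*u.2)
  map_add' u v := by simp [Prod.ext_iff]; constructor <;> ring
  map_smul' r u := by simp [Prod.ext_iff, smul_eq_mul]; constructor <;> ring

private lemma linAB'_det (A B C D : ℝ) : LinearMap.det (linAB' A B C D) = A*D - B*C := by
  have h : linAB' A B C D = Matrix.toLin (Module.Basis.finTwoProd ℝ) (Module.Basis.finTwoProd ℝ) !![A, B; C, D] := by
    apply (Module.Basis.finTwoProd ℝ).ext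
    intro i
    fin_cases i <;>
      simp [linAB', Matrix.toLin_self, Fin.sum_univ_two, Module.Basis.finTwoProd_zero, Module.Basis.finTwoProd_one,
        Prod.ext_iff]
  rw [h, LinearMap.det_toLin, Matrix.det_fin_two_of]

private lemma affine_vol' (A B C D v1 v2 : ℝ) (h : A*D - B*C ≠ 0) (S : Set (ℝ×ℝ)) :
    volume {u : ℝ×ℝ | (A*u.1 + B*u.2 + v1, C*u.1 + D*u.2 + v2) ∈ S}
      = ENNReal.ofReal |(A*D - B*C)⁻¹| * volume S := by
  have hset : {u : ℝ×ℝ | (A*u.1 + B*u.2 + v1, C*u.1 + D*u.2 + v2) ∈ S}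
      = (linAB' A B C D) ⁻¹' ((fun w => w + (v1, v2)) ⁻¹' S) := by
    ext u
    simp [linAB', Prod.ext_iff, Prod.mk_add_mk]
  rw [hset, Measure.addHaar_preimage_linearMap volume (by rw [linAB'_det]; exact h),
    measure_preimage_add_right, linAB'_det]

private lemma regvol' : volume.prod volume
    (regionBetween (fun _ => (0:ℝ)) (fun x => 1 - x) (Ioo 0 1)) = ENNReal.ofReal (1/2) := by
  rw [volume_regionBetween_eq_integral]
  · congr 1
    simp only [Pi.sub_apply]
    rw [← integral_Ioc_eq_integral_Ioo, ← intervalIntegral.integral_of_le (by norm_num : (0:ℝ) ≤ 1)]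
    simp only [sub_zero]
    rw [intervalIntegral.integral_sub intervalIntegrable_const
      intervalIntegral.intervalIntegrable_id, integral_id]
    simp; norm_num
  · exact integrableOn_const (by simp) (by simp)
  · exact ((continuous_const.sub continuous_id).integrableOn_Icc).mono_set Ioo_subset_Icc_self
  · exact measurableSet_Ioo
  · intro x hx; simp at hx; linarith [hx.2]

private lemma trivol' :
    volume {t : ℝ×ℝ | 0 ≤ t.1 ∧ 0 ≤ t.2 ∧ t.1 + t.2 ≤ 1} = ENNReal.ofReal (1/2) := by
  set R := regionBetween (fun _ => (0:ℝ)) (fun x => 1 - x) (Ioo 0 1) with hR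
  set N : Set (ℝ×ℝ) := {t | t.1 = 0} ∪ {t | t.2 = 0} ∪ {t | t.1 + t.2 = 1} with hNdef
  have hN : volume N = 0 := by
    have h1 : volume {t : ℝ×ℝ | t.1 = 0} = 0 := by
      have : {t : ℝ×ℝ | t.1 = 0} = ({0} : Set ℝ) ×ˢ (univ : Set ℝ) := by
        ext ⟨t1,t2⟩; simp [Set.mem_prod, eq_comm]
      rw [this, Measure.volume_eq_prod, Measure.prod_prod]
      simp
    have h2 : volume {t : ℝ×ℝ | t.2 = 0} = 0 := by
      have : {t : ℝ×ℝ | t.2 = 0} = (univ : Set ℝ) ×ˢ ({0} : Set ℝ) := by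
        ext ⟨t1,t2⟩; simp [Set.mem_prod, eq_comm]
      rw [this, Measure.volume_eq_prod, Measure.prod_prod]
      simp
    have h3 : volume {t : ℝ×ℝ | t.1 + t.2 = 1} = 0 := by
      have hms : MeasurableSet {t : ℝ×ℝ | t.1 + t.2 = 1} := by
        have : {t : ℝ×ℝ | t.1 + t.2 = 1} = (fun t : ℝ×ℝ => t.1 + t.2) ⁻¹' {1} := rfl
        rw [this]
        exact (measurable_fst.add measurable_snd) (measurableSet_singleton 1)
      rw [Measure.volume_eq_prod, Measure.prod_apply hms]
      have : ∀ x : ℝ, (Prod.mk x ⁻¹' {t : ℝ×ℝ | t.1 + t.2 = 1}) = {1 - x} := by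
        intro x; ext z; simp; constructor <;> intro h <;> linarith
      simp [this]
    refine le_antisymm ?_ zero_le
    calc volume N ≤ volume ({t : ℝ×ℝ | t.1 = 0} ∪ {t : ℝ×ℝ | t.2 = 0})
        + volume {t : ℝ×ℝ | t.1 + t.2 = 1} := measure_union_le _ _
    _ ≤ (volume {t : ℝ×ℝ | t.1 = 0} + volume {t : ℝ×ℝ | t.2 = 0})
        + volume {t : ℝ×ℝ | t.1 + t.2 = 1} := by
        gcongr; exact measure_union_le _ _
    _ = 0 := by rw [h1, h2, h3]; simp
  have hRsub : R ⊆ {t : ℝ×ℝ | 0 ≤ t.1 ∧ 0 ≤ t.2 ∧ t.1 + t.2 ≤ 1} := by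
    intro t ht
    obtain ⟨h1, h2⟩ := ht
    simp only [mem_Ioo] at h1 h2
    exact ⟨le_of_lt h1.1, le_of_lt h2.1, by linarith [h2.2]⟩
  have hsub2 : {t : ℝ×ℝ | 0 ≤ t.1 ∧ 0 ≤ t.2 ∧ t.1 + t.2 ≤ 1} ⊆ R ∪ N := by
    intro t ht
    obtain ⟨h1, h2, h3⟩ := ht
    by_cases e1 : t.1 = 0
    · exact Or.inr (Or.inl (Or.inl e1))
    by_cases e2 : t.2 = 0
    · exact Or.inr (Or.inl (Or.inr e2))
    by_cases e3 : t.1 + t.2 = 1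
    · exact Or.inr (Or.inr e3)
    · left
      refine ⟨?_, ?_⟩
      · simp only [mem_Ioo]
        constructor
        · exact lt_of_le_of_ne h1 (Ne.symm e1)
        · have : 0 < t.2 := lt_of_le_of_ne h2 (Ne.symm e2)
          linarith [lt_of_le_of_ne h3 e3]
      · simp only [mem_Ioo]
        refine ⟨lt_of_le_of_ne h2 (Ne.symm e2), ?_⟩
        have := lt_of_le_of_ne h3 e3
        linarith
  have hle : volume {t : ℝ×ℝ | 0 ≤ t.1 ∧ 0 ≤ t.2 ∧ t.1 + t.2 ≤ 1} ≤ ENNReal.ofReal (1/2) := by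
    calc volume {t : ℝ×ℝ | 0 ≤ t.1 ∧ 0 ≤ t.2 ∧ t.1 + t.2 ≤ 1}
        ≤ volume (R ∪ N) := measure_mono hsub2
    _ ≤ volume R + volume N := measure_union_le _ _
    _ = ENNReal.ofReal (1/2) := by
        rw [hN, add_zero, hR, Measure.volume_eq_prod]
        exact regvol'
  have hge : ENNReal.ofReal (1/2) ≤ volume {t : ℝ×ℝ | 0 ≤ t.1 ∧ 0 ≤ t.2 ∧ t.1 + t.2 ≤ 1} := by
    rw [← regvol', ← Measure.volume_eq_prod]
    exact measure_mono hRsub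
  exact le_antisymm hle hge

private lemma ray_noncompact' (a b c : Fin 3 → ℝ) (T : Set (ℝ × ℝ))
    (hT : T = {p : ℝ × ℝ | ∀ i, 0 ≤ a i + b i * p.1 + c i * p.2})
    (z : ℝ × ℝ) (hz : z ∈ T) (d : ℝ × ℝ) (hd : d ≠ 0)
    (hdir : ∀ i, 0 ≤ b i * d.1 + c i * d.2) : ¬ IsCompact T := by
  intro hc
  obtain ⟨Cb, hCb⟩ := isBounded_iff_forall_norm_le.mp hc.isBounded
  have hdn : 0 < ‖d‖ := norm_pos_iff.mpr hd
  set t := (Cb + ‖z‖ + 1) / ‖d‖ with htdef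
  have hnum : 0 < Cb + ‖z‖ + 1 := by
    have h1 := norm_nonneg z
    have h2 := le_trans h1 (hCb z hz)
    linarith
  have ht : 0 ≤ t := le_of_lt (div_pos hnum hdn)
  have hmem : z + t • d ∈ T := by
    have hz' : ∀ i, 0 ≤ a i + b i * z.1 + c i * z.2 := by rw [hT] at hz; exact hz
    rw [hT]
    intro i
    have h1 : (z + t • d).1 = z.1 + t * d.1 := rfl
    have h2 : (z + t • d).2 = z.2 + t * d.2 := rfl
    rw [h1, h2]
    have ha := mul_nonneg ht (hdir i)
    have hb := hz' i
    nlinarith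
  have h1 : ‖z + t • d‖ ≤ Cb := hCb _ hmem
  have h2 : t * ‖d‖ ≤ ‖z + t • d‖ + ‖z‖ := by
    have he : ‖t • d‖ = t * ‖d‖ := by
      rw [norm_smul, Real.norm_eq_abs, abs_of_nonneg ht]
    calc t * ‖d‖ = ‖t • d‖ := he.symm
    _ = ‖(z + t • d) - z‖ := by congr 1; abel
    _ ≤ ‖z + t • d‖ + ‖z‖ := norm_sub_le _ _
  have h3 : t * ‖d‖ = Cb + ‖z‖ + 1 := by
    rw [htdef, div_mul_cancel₀ _ (ne_of_gt hdn)]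
  linarith

private lemma colsDepDet' (a b c : Fin 3 → ℝ) (g : Matrix (Fin 3) (Fin 3) ℝ)
    (hg : g = Matrix.of fun j i => ![a i, b i, c i] j)
    (i k : Fin 3) (hik : i ≠ k)
    (hbi : b i = 0) (hci : c i = 0) (hbk : b k = 0) (hck : c k = 0) : g.det = 0 := by
  rw [← Matrix.exists_mulVec_eq_zero_iff]
  by_cases hai : a i = 0 ∧ a k = 0
  · refine ⟨Pi.single i 1, ?_, ?_⟩
    · intro h0
      have := congrFun h0 i
      simp at this
    · funext r
      simp only [Matrix.mulVec_single, Pi.zero_apply, mul_one]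
      fin_cases r <;> simp [hg, hai.1, hbi, hci]
  · refine ⟨Pi.single i (a k) - Pi.single k (a i), ?_, ?_⟩
    · intro h0
      rcases not_and_or.mp hai with h | h
      · have := congrFun h0 k
        simp [Pi.single_eq_of_ne (Ne.symm hik), hik] at this
        exact h this
      · have := congrFun h0 i
        simp [Pi.single_eq_of_ne hik] at this
        exact h this
    · funext r
      rw [Matrix.mulVec_sub]
      simp only [Matrix.mulVec_single, Pi.sub_apply, Pi.zero_apply]
      fin_cases r <;> simp [hg, hbi, hci, hbk, hck] <;> ring

set_option maxHeartbeats 1000000 in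
private lemma keyJ1' (a0 a1 a2 b0 b1 b2 c0 c1 c2 x y K : ℝ)
    (hKd : K = a0*(b1*c2 - b2*c1) - a1*(b0*c2 - b2*c0) + a2*(b0*c1 - b1*c0))
    (hK0 : K ≠ 0) (u1 u2 p1 p2 : ℝ) :
    ((1 - u1*x - u2*y)*(b1*c2 - b2*c1) - u1*(a1*c2 - a2*c1) + u2*(a1*b2 - a2*b1))/K
      * (a0 + b0*p1 + c0*p2)
    + (-(1 - u1*x - u2*y)*(b0*c2 - b2*c0) + u1*(a0*c2 - a2*c0) - u2*(a0*b2 - a2*b0))/K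
      * (a1 + b1*p1 + c1*p2)
    + ((1 - u1*x - u2*y)*(b0*c1 - b1*c0) - u1*(a0*c1 - a1*c0) + u2*(a0*b1 - a1*b0))/K
      * (a2 + b2*p1 + c2*p2)
    = 1 + u1*(p1 - x) + u2*(p2 - y) := by
  field_simp
  subst hKd
  ring

set_option maxHeartbeats 1000000 in
private lemma keyJ2' (a0 a1 a2 b0 b1 b2 c0 c1 c2 x y K s0 s1 s2 : ℝ)
    (hKd : K = a0*(b1*c2 - b2*c1) - a1*(b0*c2 - b2*c0) + a2*(b0*c1 - b1*c0))
    (hs0d : s0 = a0 + b0*x + c0*y) (hs1d : s1 = a1 + b1*x + c1*y) (hs2d : s2 = a2 + b2*x + c2*y)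
    (hK0 : K ≠ 0) (u1 u2 : ℝ) :
    (s0 * (((1 - u1*x - u2*y)*(b1*c2 - b2*c1) - u1*(a1*c2 - a2*c1) + u2*(a1*b2 - a2*b1))/K)
      = (s0*(-x*(b1*c2 - b2*c1) - (a1*c2 - a2*c1))/K)*u1
        + (s0*(-y*(b1*c2 - b2*c1) + (a1*b2 - a2*b1))/K)*u2 + s0*(b1*c2 - b2*c1)/K)
    ∧ (s1 * ((-(1 - u1*x - u2*y)*(b0*c2 - b2*c0) + u1*(a0*c2 - a2*c0) - u2*(a0*b2 - a2*b0))/K)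
      = (s1*(x*(b0*c2 - b2*c0) + (a0*c2 - a2*c0))/K)*u1
        + (s1*(y*(b0*c2 - b2*c0) - (a0*b2 - a2*b0))/K)*u2 + s1*(-(b0*c2 - b2*c0))/K)
    ∧ (s2 * (((1 - u1*x - u2*y)*(b0*c1 - b1*c0) - u1*(a0*c1 - a1*c0) + u2*(a0*b1 - a1*b0))/K)
      = 1 - ((s0*(-x*(b1*c2 - b2*c1) - (a1*c2 - a2*c1))/K)*u1
            + (s0*(-y*(b1*c2 - b2*c1) + (a1*b2 - a2*b1))/K)*u2 + s0*(b1*c2 - b2*c1)/K)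
          - ((s1*(x*(b0*c2 - b2*c0) + (a0*c2 - a2*c0))/K)*u1
            + (s1*(y*(b0*c2 - b2*c0) - (a0*b2 - a2*b0))/K)*u2 + s1*(-(b0*c2 - b2*c0))/K)) := by
  subst hs0d hs1d hs2d
  refine ⟨by field_simp; subst hKd; ring, by field_simp; subst hKd; ring, by field_simp; subst hKd; ring⟩

set_option maxHeartbeats 1000000 in
private lemma keyJ3' (a0 a1 a2 b0 b1 b2 c0 c1 c2 x y K s0 s1 s2 : ℝ)
    (hKd : K = a0*(b1*c2 - b2*c1) - a1*(b0*c2 - b2*c0) + a2*(b0*c1 - b1*c0))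
    (hs0d : s0 = a0 + b0*x + c0*y) (hs1d : s1 = a1 + b1*x + c1*y) (hs2d : s2 = a2 + b2*x + c2*y)
    (hK0 : K ≠ 0) :
    (s0*(-x*(b1*c2 - b2*c1) - (a1*c2 - a2*c1))/K) * (s1*(y*(b0*c2 - b2*c0) - (a0*b2 - a2*b0))/K)
    - (s0*(-y*(b1*c2 - b2*c1) + (a1*b2 - a2*b1))/K) * (s1*(x*(b0*c2 - b2*c0) + (a0*c2 - a2*c0))/K)
    = s0*s1*s2/K := by
  subst hs0d hs1d hs2d
  field_simp
  subst hKd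
  ring

private lemma memIff' {s0v s1v s2v l0 l1 l2 P0 P1 e0 e1 e2 R : ℝ}
    (h0 : 0 < s0v) (h1 : 0 < s1v) (h2 : 0 < s2v)
    (hP0 : s0v * l0 = P0) (hP1 : s1v * l1 = P1) (hP2 : s2v * l2 = 1 - P0 - P1)
    (hkey : l0 * e0 + l1 * e1 + l2 * e2 = R)
    (he0 : 0 ≤ e0) (he1 : 0 ≤ e1) (he2 : 0 ≤ e2)
    (hQ0 : 0 ≤ P0) (hQ1 : 0 ≤ P1) (hQ01 : P0 + P1 ≤ 1) : 0 ≤ R := by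
  have hl0 : 0 ≤ l0 := by by_contra hcon; push_neg at hcon; nlinarith
  have hl1 : 0 ≤ l1 := by by_contra hcon; push_neg at hcon; nlinarith
  have hl2 : 0 ≤ l2 := by by_contra hcon; push_neg at hcon; nlinarith
  nlinarith [mul_nonneg hl0 he0, mul_nonneg hl1 he1, mul_nonneg hl2 he2]

private lemma vertexNonneg' {l e R : ℝ} (h : l * e = R) (hR : 0 ≤ R) (he : 0 < e) : 0 ≤ l := by
  by_contra hcon
  push_neg at hcon
  nlinarith

end AuxLemmas

set_option maxHeartbeats 4000000 in
/-- For a Euclidean triangle `T ⊂ ℝ²` with facet lines `aᵢ + bᵢ x + cᵢ y = 0` and `g` the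
`3×3` matrix with columns `(aᵢ, bᵢ, cᵢ)`, the normalized volume (twice the Lebesgue area
in dimension 2) of the polar dual `(T - (x,y))^∨` equals `± det g / ∏ᵢ (aᵢ + bᵢ x + cᵢ y)`
for `(x,y)` in the interior of `T`; in particular the rational function
`det g / ∏ᵢ (aᵢ + bᵢ x + cᵢ y)` has constant sign on the interior of `T`. -/
theorem triangle_canonical_form_det_formula
    (a b c : Fin 3 → ℝ)
    (g : Matrix (Fin 3) (Fin 3) ℝ)
    (hg : g = Matrix.of fun j i => ![a i, b i, c i] j)
    (hdet : g.det ≠ 0)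
    (T : Set (ℝ × ℝ))
    (hT : T = {p : ℝ × ℝ | ∀ i, 0 ≤ a i + b i * p.1 + c i * p.2})
    (hTc : IsCompact T)
    (x y : ℝ) (hxy : (x, y) ∈ interior T) :
    2 * (volume {u : ℝ × ℝ | ∀ p ∈ T, u.1 * (p.1 - x) + u.2 * (p.2 - y) ≥ -1}).toReal
        = |g.det| / |∏ i, (a i + b i * x + c i * y)| ∧
    (∀ p ∈ interior T, ∀ q ∈ interior T,
      0 < (g.det / ∏ i, (a i + b i * p.1 + c i * p.2))
            * (g.det / ∏ i, (a i + b i * q.1 + c i * q.2))) := by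
  have hzT : (x, y) ∈ T := interior_subset hxy
  -- positivity of the affine forms on the interior
  have hpos : ∀ p ∈ interior T, ∀ i, 0 < a i + b i * p.1 + c i * p.2 := by
    intro p hp i
    have hpT : ∀ m : Fin 3, 0 ≤ a m + b m * p.1 + c m * p.2 := by
      have h' := interior_subset hp; rw [hT] at h'; exact h'
    rcases eq_or_lt_of_le (hpT i) with h | h
    · exfalso
      obtain ⟨ε, hε, hball⟩ := Metric.isOpen_iff.mp isOpen_interior p hp
      by_cases hn : b i = 0 ∧ c i = 0
      · have hai : a i = 0 := by
          have hb := hn.1; have hc := hn.2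
          rw [hb, hc] at h; linarith
        apply hdet
        rw [← Matrix.exists_mulVec_eq_zero_iff]
        refine ⟨Pi.single i 1, fun h0 => by simpa using congrFun h0 i, ?_⟩
        funext r
        simp only [Matrix.mulVec_single, Pi.zero_apply, mul_one]
        fin_cases r <;> simp [hg, hai, hn.1, hn.2]
      · set δ := ε / (|b i| + |c i| + 1) with hδdef
        have habs : 0 < |b i| + |c i| + 1 := by positivity
        have hδ : 0 < δ := div_pos hε habs
        have hq : (p.1 - δ * b i, p.2 - δ * c i) ∈ Metric.ball p ε := by
          rw [Metric.mem_ball, Prod.dist_eq]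
          have h1 : dist (p.1 - δ * b i) p.1 = δ * |b i| := by
            rw [Real.dist_eq]
            have : p.1 - δ * b i - p.1 = -(δ * b i) := by ring
            rw [this, abs_neg, abs_mul, abs_of_pos hδ]
          have h2 : dist (p.2 - δ * c i) p.2 = δ * |c i| := by
            rw [Real.dist_eq]
            have : p.2 - δ * c i - p.2 = -(δ * c i) := by ring
            rw [this, abs_neg, abs_mul, abs_of_pos hδ]
          rw [h1, h2]
          apply max_lt
          · rw [hδdef]
            rw [div_mul_eq_mul_div, div_lt_iff₀ habs]
            nlinarith [abs_nonneg (b i), abs_nonneg (c i)]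
          · rw [hδdef]
            rw [div_mul_eq_mul_div, div_lt_iff₀ habs]
            nlinarith [abs_nonneg (b i), abs_nonneg (c i)]
        have hqT : ∀ m : Fin 3, 0 ≤ a m + b m * (p.1 - δ * b i) + c m * (p.2 - δ * c i) := by
          have h'' := interior_subset (hball hq); rw [hT] at h''; exact h''
        have hcontra := hqT i
        have hbc : 0 < b i * b i + c i * c i := by
          rcases not_and_or.mp hn with h' | h'
          · nlinarith [mul_self_pos.mpr h', mul_self_nonneg (c i)]
          · nlinarith [mul_self_pos.mpr h', mul_self_nonneg (b i)]
        nlinarith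
    · exact h
  have hs0 : 0 < a 0 + b 0 * x + c 0 * y := by simpa using hpos (x, y) hxy 0
  have hs1 : 0 < a 1 + b 1 * x + c 1 * y := by simpa using hpos (x, y) hxy 1
  have hs2 : 0 < a 2 + b 2 * x + c 2 * y := by simpa using hpos (x, y) hxy 2
  -- determinant formula
  have hKg : g.det = a 0*(b 1*c 2 - b 2*c 1) - a 1*(b 0*c 2 - b 2*c 0)
      + a 2*(b 0*c 1 - b 1*c 0) := by
    rw [hg, Matrix.det_fin_three]
    simp [Matrix.of_apply]
    ring
  have hK0 : a 0*(b 1*c 2 - b 2*c 1) - a 1*(b 0*c 2 - b 2*c 0)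
      + a 2*(b 0*c 1 - b 1*c 0) ≠ 0 := by rw [← hKg]; exact hdet
  -- ray lemma specialization
  have hray : ∀ d : ℝ × ℝ, d ≠ 0 → (∀ i, 0 ≤ b i * d.1 + c i * d.2) → False :=
    fun d h1 h2 => ray_noncompact' a b c T hT (x, y) hzT d h1 h2 hTc
  -- pairwise independence of the normals
  have hpair : ∀ i j k : Fin 3, i ≠ j → i ≠ k → j ≠ k → b i * c k - b k * c i ≠ 0 := by
    intro i j k hij hik hjk hD
    have hcov := fun l => threeCover' i j k l hij hik hjk
    have hperp : ∀ e : ℝ × ℝ, e ≠ 0 → b i * e.1 + c i * e.2 = 0 →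
        b k * e.1 + c k * e.2 = 0 → False := by
      intro e he hei hek
      rcases le_or_gt 0 (b j * e.1 + c j * e.2) with hE | hE
      · refine hray e he (fun l => ?_)
        rcases hcov l with rfl | rfl | rfl
        · exact le_of_eq hei.symm
        · exact hE
        · exact le_of_eq hek.symm
      · refine hray (-e) (neg_ne_zero.mpr he) (fun l => ?_)
        have h1 : (-e).1 = -e.1 := rfl
        have h2 : (-e).2 = -e.2 := rfl
        rcases hcov l with rfl | rfl | rfl <;> rw [h1, h2] <;> nlinarith
    by_cases hni : b i = 0 ∧ c i = 0
    · by_cases hnk : b k = 0 ∧ c k = 0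
      · exact hdet (colsDepDet' a b c g hg i k hik hni.1 hni.2 hnk.1 hnk.2)
      · apply hperp (-(c k), b k)
        · intro h0
          apply hnk
          have h1 := congrArg Prod.fst h0
          have h2 := congrArg Prod.snd h0
          simp at h1 h2
          exact ⟨h2, h1⟩
        · show b i * (-(c k)) + c i * b k = 0
          rw [hni.1, hni.2]; ring
        · show b k * (-(c k)) + c k * b k = 0
          ring
    · apply hperp (-(c i), b i)
      · intro h0
        apply hni
        have h1 := congrArg Prod.fst h0
        have h2 := congrArg Prod.snd h0
        simp at h1 h2
        exact ⟨h2, h1⟩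
      · show b i * (-(c i)) + c i * b i = 0
        ring
      · show b k * (-(c i)) + c k * b i = 0
        linarith [hD]
  -- vertices of the triangle
  have hvert : ∀ i j k : Fin 3, i ≠ j → i ≠ k → j ≠ k →
      ∃ v : ℝ × ℝ, (a i + b i * v.1 + c i * v.2 = 0) ∧ (a k + b k * v.1 + c k * v.2 = 0)
        ∧ (0 < a j + b j * v.1 + c j * v.2) ∧ v ∈ T := by
    intro i j k hij hik hjk
    have hcov := fun l => threeCover' i j k l hij hik hjk
    have hD := hpair i j k hij hik hjk
    set v : ℝ × ℝ := ((a k * c i - a i * c k)/(b i * c k - b k * c i),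
      (a i * b k - a k * b i)/(b i * c k - b k * c i)) with hvdef
    have hv1 : v.1 = (a k * c i - a i * c k)/(b i * c k - b k * c i) := rfl
    have hv2 : v.2 = (a i * b k - a k * b i)/(b i * c k - b k * c i) := rfl
    have hvi : a i + b i * v.1 + c i * v.2 = 0 := by
      rw [hv1, hv2]
      rw [mul_div_assoc', mul_div_assoc', add_assoc, ← add_div, add_div' _ _ _ hD, div_eq_zero_iff]
      left
      ring
    have hvk : a k + b k * v.1 + c k * v.2 = 0 := by
      rw [hv1, hv2]
      rw [mul_div_assoc', mul_div_assoc', add_assoc, ← add_div, add_div' _ _ _ hD, div_eq_zero_iff]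
      left
      ring
    have hvj0 : a j + b j * v.1 + c j * v.2 ≠ 0 := by
      intro h0
      apply hdet
      rw [← Matrix.exists_vecMul_eq_zero_iff]
      refine ⟨![1, v.1, v.2], fun hcon => by simpa using congrFun hcon 0, ?_⟩
      funext m
      have hm : (Matrix.vecMul ![1, v.1, v.2] g) m = a m + b m * v.1 + c m * v.2 := by
        rw [hg]
        simp [Matrix.vecMul, dotProduct, Fin.sum_univ_three]
        ring
      rw [hm]
      show a m + b m * v.1 + c m * v.2 = 0
      rcases hcov m with rfl | rfl | rfl
      · exact hvi
      · exact h0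
      · exact hvk
    have hvj : 0 < a j + b j * v.1 + c j * v.2 := by
      rcases hvj0.lt_or_gt with hneg | hposj
      · exfalso
        apply hray (x - v.1, y - v.2)
        · intro h0
          have h1 : x = v.1 := by
            have := congrArg Prod.fst h0
            simpa [sub_eq_zero] using this
          have h2 : y = v.2 := by
            have := congrArg Prod.snd h0
            simpa [sub_eq_zero] using this
          have hsi : 0 < a i + b i * x + c i * y := by simpa using hpos (x, y) hxy i
          rw [hv1] at h1
          rw [hv2] at h2
          have hvi' := hvi
          rw [hv1, hv2] at hvi'
          rw [h1, h2] at hsi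
          linarith [hvi']
        · intro l
          show 0 ≤ b l * (x - v.1) + c l * (y - v.2)
          have hsl : 0 < a l + b l * x + c l * y := by simpa using hpos (x, y) hxy l
          rcases hcov l with rfl | rfl | rfl
          · nlinarith
          · nlinarith
          · nlinarith
      · exact hposj
    have hvT : v ∈ T := by
      rw [hT]
      intro m
      rcases hcov m with rfl | rfl | rfl
      · exact le_of_eq hvi.symm
      · exact le_of_lt hvj
      · exact le_of_eq hvk.symm
    exact ⟨v, hvi, hvk, hvj, hvT⟩
  -- the three key algebraic identities
  have hJ1 := keyJ1' (a 0) (a 1) (a 2) (b 0) (b 1) (b 2) (c 0) (c 1) (c 2) x y _ rfl hK0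
  have hJ2 := keyJ2' (a 0) (a 1) (a 2) (b 0) (b 1) (b 2) (c 0) (c 1) (c 2) x y _ _ _ _
    rfl rfl rfl rfl hK0
  have hJ3 := keyJ3' (a 0) (a 1) (a 2) (b 0) (b 1) (b 2) (c 0) (c 1) (c 2) x y _ _ _ _
    rfl rfl rfl rfl hK0
  -- abbreviations
  set K := a 0*(b 1*c 2 - b 2*c 1) - a 1*(b 0*c 2 - b 2*c 0) + a 2*(b 0*c 1 - b 1*c 0) with hKd
  set s0 := a 0 + b 0 * x + c 0 * y with hs0d
  set s1 := a 1 + b 1 * x + c 1 * y with hs1d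
  set s2 := a 2 + b 2 * x + c 2 * y with hs2d
  set A := s0*(-x*(b 1*c 2 - b 2*c 1) - (a 1*c 2 - a 2*c 1))/K with hAd
  set B := s0*(-y*(b 1*c 2 - b 2*c 1) + (a 1*b 2 - a 2*b 1))/K with hBd
  set w1 := s0*(b 1*c 2 - b 2*c 1)/K with hw1d
  set C := s1*(x*(b 0*c 2 - b 2*c 0) + (a 0*c 2 - a 2*c 0))/K with hCd
  set D := s1*(y*(b 0*c 2 - b 2*c 0) - (a 0*b 2 - a 2*b 0))/K with hDd
  set w2 := s1*(-(b 0*c 2 - b 2*c 0))/K with hw2d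
  clear_value A B C D w1 w2
  clear_value K s0 s1 s2
  -- the polar dual as an affine preimage of the standard triangle
  have hUeq : {u : ℝ × ℝ | ∀ p ∈ T, u.1 * (p.1 - x) + u.2 * (p.2 - y) ≥ -1}
      = {u : ℝ × ℝ | (A*u.1 + B*u.2 + w1, C*u.1 + D*u.2 + w2)
          ∈ {t : ℝ×ℝ | 0 ≤ t.1 ∧ 0 ≤ t.2 ∧ t.1 + t.2 ≤ 1}} := by
    ext u
    simp only [Set.mem_setOf_eq]
    constructor
    · intro hu
      refine ⟨?_, ?_, ?_⟩
      · obtain ⟨v, hvi, hvk, hvj, hvT⟩ := hvert 1 0 2 (by decide) (by decide) (by decide)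
        have hk := hJ1 u.1 u.2 v.1 v.2
        rw [hvi, hvk] at hk
        simp only [mul_zero, zero_add, add_zero] at hk
        have hRv : 0 ≤ 1 + u.1*(v.1 - x) + u.2*(v.2 - y) := by
          have := hu v hvT; linarith
        have hl := vertexNonneg' hk hRv hvj
        have hP := (hJ2 u.1 u.2).1
        show (0:ℝ) ≤ A*u.1 + B*u.2 + w1
        rw [← hP]
        exact mul_nonneg (le_of_lt hs0) hl
      · obtain ⟨v, hvi, hvk, hvj, hvT⟩ := hvert 0 1 2 (by decide) (by decide) (by decide)
        have hk := hJ1 u.1 u.2 v.1 v.2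
        rw [hvi, hvk] at hk
        simp only [mul_zero, zero_add, add_zero] at hk
        have hRv : 0 ≤ 1 + u.1*(v.1 - x) + u.2*(v.2 - y) := by
          have := hu v hvT; linarith
        have hl := vertexNonneg' hk hRv hvj
        have hP := (hJ2 u.1 u.2).2.1
        show (0:ℝ) ≤ C*u.1 + D*u.2 + w2
        rw [← hP]
        exact mul_nonneg (le_of_lt hs1) hl
      · obtain ⟨v, hvi, hvk, hvj, hvT⟩ := hvert 0 2 1 (by decide) (by decide) (by decide)
        have hk := hJ1 u.1 u.2 v.1 v.2
        rw [hvi, hvk] at hk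
        simp only [mul_zero, zero_add, add_zero] at hk
        have hRv : 0 ≤ 1 + u.1*(v.1 - x) + u.2*(v.2 - y) := by
          have := hu v hvT; linarith
        have hl := vertexNonneg' hk hRv hvj
        have hP := (hJ2 u.1 u.2).2.2
        show (A*u.1 + B*u.2 + w1) + (C*u.1 + D*u.2 + w2) ≤ 1
        have := mul_nonneg (le_of_lt hs2) hl
        linarith [hP ▸ this]
    · intro hu p hp
      obtain ⟨h0, h1, h01⟩ := hu
      have hpT : ∀ m : Fin 3, 0 ≤ a m + b m * p.1 + c m * p.2 := by
        rw [hT] at hp; exact hp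
      have hk := hJ1 u.1 u.2 p.1 p.2
      have hJu := hJ2 u.1 u.2
      have hR := memIff' hs0 hs1 hs2 hJu.1 hJu.2.1 hJu.2.2 hk (hpT 0) (hpT 1) (hpT 2) h0 h1 h01
      linarith
  -- determinant of the affine map
  have hADne : A*D - B*C ≠ 0 := by
    rw [hJ3]
    exact div_ne_zero (ne_of_gt (mul_pos (mul_pos hs0 hs1) hs2)) hK0
  constructor
  · rw [hUeq, affine_vol' A B C D w1 w2 hADne _, trivol']
    rw [hKg]
    rw [Fin.prod_univ_three]
    rw [← hs0d, ← hs1d, ← hs2d]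
    rw [← ENNReal.ofReal_mul (abs_nonneg _), ENNReal.toReal_ofReal (by positivity)]
    rw [hJ3, abs_inv, abs_div, inv_div]
    ring
  · intro p hp q hq
    have h1 := hpos p hp
    have h2 := hpos q hq
    rw [hKg, Fin.prod_univ_three, Fin.prod_univ_three]
    have hPp : 0 < (a 0 + b 0 * p.1 + c 0 * p.2) * (a 1 + b 1 * p.1 + c 1 * p.2)
        * (a 2 + b 2 * p.1 + c 2 * p.2) := mul_pos (mul_pos (h1 0) (h1 1)) (h1 2)
    have hPq : 0 < (a 0 + b 0 * q.1 + c 0 * q.2) * (a 1 + b 1 * q.1 + c 1 * q.2)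
        * (a 2 + b 2 * q.1 + c 2 * q.2) := mul_pos (mul_pos (h2 0) (h2 1)) (h2 2)
    rw [div_mul_div_comm]
    apply div_pos
    · rcases hK0.lt_or_gt with h | h <;> nlinarith
    · exact mul_pos hPp hPq
end

section
/- For a full-dimensional polytope P ⊂ R^d and interior point x, the function x ↦ Vol((P-x)^∨) is a rational function of x on the interior of P; in dimension 1, for P=[a,b] and a<x<b, Vol((P-x)^∨) = 1/(x-a) + 1/(b-x) = (b-a)/((x-a)(b-x)). -/
open MeasureTheory

/-- Dual volume in dimension one: for `P = [a,b]` and `a < x < b`, the volume of the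
polar dual `(P - x)^∨` equals `1/(x-a) + 1/(b-x) = (b-a)/((x-a)(b-x))`. -/
theorem dual_volume_interval (a b x : ℝ) (hax : a < x) (hxb : x < b) :
    (volume {u : ℝ | ∀ s ∈ Set.Icc a b, u * (s - x) ≥ -1}).toReal
        = 1 / (x - a) + 1 / (b - x) ∧
    1 / (x - a) + 1 / (b - x) = (b - a) / ((x - a) * (b - x)) := by
  have hxa : (0:ℝ) < x - a := by linarith
  have hbx : (0:ℝ) < b - x := by linarith
  constructor
  · have hset : {u : ℝ | ∀ s ∈ Set.Icc a b, u * (s - x) ≥ -1}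
        = Set.Icc (-(1 / (b - x))) (1 / (x - a)) := by
      ext u
      simp only [Set.mem_setOf_eq, Set.mem_Icc]
      constructor
      · intro h
        have ha := h a ⟨le_refl a, le_of_lt (lt_trans hax hxb)⟩
        have hb := h b ⟨le_of_lt (lt_trans hax hxb), le_refl b⟩
        constructor
        · rw [neg_le]
          exact (le_div_iff₀ hbx).mpr (by nlinarith)
        · exact (le_div_iff₀ hxa).mpr (by nlinarith)
      · rintro ⟨h1, h2⟩ s ⟨hs1, hs2⟩
        rcases le_or_gt 0 u with hu | hu
        · have : u * (s - x) ≥ u * (a - x) := by nlinarith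
          have h2' : u * (x - a) ≤ 1 := (le_div_iff₀ hxa).mp h2
          nlinarith
        · have : u * (s - x) ≥ u * (b - x) := by nlinarith
          have key : (1 / (b - x)) * (b - x) = 1 := by field_simp
          nlinarith
    rw [hset, Real.volume_Icc, ENNReal.toReal_ofReal (by
      rw [sub_neg_eq_add]
      exact add_nonneg (div_nonneg zero_le_one hxa.le) (div_nonneg zero_le_one hbx.le))]
    ring
  · rw [div_add_div _ _ (ne_of_gt hxa) (ne_of_gt hbx)]
    ring_nf
end

section
/- Let Φ: C^2 ⇢ C^2 be the rational map Φ(z_1,z_2) = ((2z_1+z_1z_2)/(1+z_1+z_1z_2+z_2), (2z_1z_2+z_2)/(1+z_1+z_1z_2+z_2)). For generic (x,y), the fiber Φ^{-1}(x,y) consists of exactly two points; i.e., the system (2z_1+z_1z_2)/(1+z_1+z_1z_2+z_2) = x, (2z_1z_2+z_2)/(1+z_1+z_1z_2+z_2) = y has exactly two solutions (z_1,z_2) whenever the discriminant 2(x-2)y+(x+2)^2+y^2 is nonzero and the relevant denominators (2x+y-4), (x-y+1) are nonzero. -/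
/-- The algebraic moment map `Φ(z₁,z₂) = ((2z₁+z₁z₂)/(1+z₁+z₁z₂+z₂), (2z₁z₂+z₂)/(1+z₁+z₁z₂+z₂))`
has degree two: for generic `(x,y)` (discriminant `2(x-2)y+(x+2)²+y² ≠ 0` and
`2x+y-4 ≠ 0`, `x-y+1 ≠ 0`) the fiber `Φ⁻¹(x,y)` consists of exactly two points. -/
theorem moment_map_fiber_two_points (x y : ℂ)
    (hdisc : 2*(x - 2)*y + (x + 2)^2 + y^2 ≠ 0)
    (h1 : 2*x + y - 4 ≠ 0) (h2 : x - y + 1 ≠ 0) :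
    Set.ncard {p : ℂ × ℂ | 1 + p.1 + p.1*p.2 + p.2 ≠ 0 ∧
      (2*p.1 + p.1*p.2) / (1 + p.1 + p.1*p.2 + p.2) = x ∧
      (2*p.1*p.2 + p.2) / (1 + p.1 + p.1*p.2 + p.2) = y} = 2 := by
  set S : Set (ℂ × ℂ) := {p : ℂ × ℂ | 1 + p.1 + p.1*p.2 + p.2 ≠ 0 ∧
      (2*p.1 + p.1*p.2) / (1 + p.1 + p.1*p.2 + p.2) = x ∧
      (2*p.1*p.2 + p.2) / (1 + p.1 + p.1*p.2 + p.2) = y} with hS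
  set R : Set ℂ := {z : ℂ | (4-y-2*x)*z^2 + (2-y-3*x)*z - x = 0} with hR
  have hA : (4:ℂ)-y-2*x ≠ 0 := fun h => h1 (by linear_combination -h)
  -- cleared-denominator form of membership
  have hmem : ∀ p : ℂ × ℂ, p ∈ S ↔ (1+p.1)*(1+p.2) ≠ 0 ∧
      2*p.1 + p.1*p.2 = x*((1+p.1)*(1+p.2)) ∧
      2*p.1*p.2 + p.2 = y*((1+p.1)*(1+p.2)) := by
    intro p
    have hden : 1 + p.1 + p.1*p.2 + p.2 = (1+p.1)*(1+p.2) := by ring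
    constructor
    · rintro ⟨h0, e1, e2⟩
      rw [hden] at h0 e1 e2
      exact ⟨h0, by rw [div_eq_iff h0] at e1; exact e1,
        by rw [div_eq_iff h0] at e2; exact e2⟩
    · rintro ⟨h0, e1, e2⟩
      refine ⟨by rw [hden]; exact h0, ?_, ?_⟩ <;> rw [hden, div_eq_iff h0]
      · exact e1
      · exact e2
  -- injectivity of first projection on S
  have hinj : Set.InjOn Prod.fst S := by
    rintro ⟨z, t⟩ hp ⟨z', t'⟩ hq (hzz : z = z')
    subst hzz
    rw [hmem] at hp hq
    obtain ⟨h0p, e1p, e2p⟩ := hp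
    obtain ⟨h0q, e1q, e2q⟩ := hq
    have h1z : (1:ℂ)+z ≠ 0 := left_ne_zero_of_mul h0p
    have key1 : (z - x*(1+z)) * (t - t') = 0 := by linear_combination e1p - e1q
    have key2 : (1 + 2*z - y*(1+z)) * (t - t') = 0 := by linear_combination e2p - e2q
    rcases mul_eq_zero.1 key1 with ha | htt
    · rcases mul_eq_zero.1 key2 with hc | htt
      · exfalso
        have : (x - y + 1) * (1 + z) = 0 := by linear_combination hc - ha
        rcases mul_eq_zero.1 this with h | h
        · exact h2 h
        · exact h1z h
      · exact Prod.ext rfl (by linear_combination htt)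
    · exact Prod.ext rfl (by linear_combination htt)
  -- image of S under first projection is R
  have himg : Prod.fst '' S = R := by
    ext z
    constructor
    · rintro ⟨⟨z', t⟩, hp, rfl⟩
      rw [hmem] at hp
      obtain ⟨h0, e1, e2⟩ := hp
      show (4-y-2*x)*z'^2 + (2-y-3*x)*z' - x = 0
      linear_combination (1 + 2*z' - y*(1+z'))*e1 - (z' - x*(1+z'))*e2
    · intro hz
      have hQ : (4-y-2*x)*z^2 + (2-y-3*x)*z - x = 0 := hz
      have h1z : (1:ℂ)+z ≠ 0 := by
        intro h
        have : (2:ℂ) = 0 := by linear_combination hQ - ((4-y-2*x)*z + (-2-x))*h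
        norm_num at this
      by_cases hc : (1:ℂ) + 2*z - y*(1+z) = 0
      · -- degenerate branch: here y = 0 and 1+2z = 0
        have ha : z - x*(1+z) ≠ 0 := by
          intro ha
          have : (x - y + 1) * (1 + z) = 0 := by linear_combination hc - ha
          rcases mul_eq_zero.1 this with h | h
          · exact h2 h
          · exact h1z h
        have hy : y * (1+z) = 0 := by
          have : (z - x*(1+z)) * (y*(1+z)) = 0 := by
            linear_combination hQ + (x*(1+z) - 2*z)*hc
          exact (mul_eq_zero.1 this).resolve_left ha
        have hy0 : y = 0 := (mul_eq_zero.1 hy).resolve_right h1z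
        have hz0 : z ≠ 0 := by
          intro h
          apply h2
          have hx0 : x = 0 := by linear_combination -hQ + ((4-y-2*x)*z + (2-y-3*x))*h
          have : y = 1 := by linear_combination -hc - z*hy0 + 2*h
          rw [hx0, this]; ring
        refine ⟨(z, (x*(1+z) - 2*z)/(z - x*(1+z))), ?_, rfl⟩
        rw [hmem]
        have h1t : 1 + (x*(1+z) - 2*z)/(z - x*(1+z)) = -z / (z - x*(1+z)) := by
          field_simp
          ring
        refine ⟨?_, ?_, ?_⟩
        · rw [h1t]
          exact mul_ne_zero h1z (div_ne_zero (neg_ne_zero.2 hz0) ha)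
        · show 2*z + z*((x*(1+z) - 2*z)/(z - x*(1+z))) = _
          rw [h1t]
          field_simp
          ring
        · show 2*z*((x*(1+z) - 2*z)/(z - x*(1+z))) + (x*(1+z) - 2*z)/(z - x*(1+z)) = _
          rw [h1t, hy0]
          have h12 : 1 + 2*z = 0 := by linear_combination hc + (1+z)*hy0
          field_simp
          linear_combination (x*(z+1) - 2*z)*h12
      · -- generic branch: t = y(1+z)/c
        have h12 : (1:ℂ) + 2*z ≠ 0 := by
          intro h12
          apply hc
          have hy0 : y = 0 := by
            linear_combination 4*hQ - (2*(4-y-2*x)*z + (-4*x - y))*h12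
          linear_combination h12 - (1+z)*hy0
        refine ⟨(z, y*(1+z)/(1 + 2*z - y*(1+z))), ?_, rfl⟩
        rw [hmem]
        have h1t : 1 + y*(1+z)/(1 + 2*z - y*(1+z)) = (1+2*z)/(1 + 2*z - y*(1+z)) := by
          rw [one_add_div hc]; congr 1; ring
        refine ⟨?_, ?_, ?_⟩
        · rw [h1t]
          exact mul_ne_zero h1z (div_ne_zero h12 hc)
        · show 2*z + z*(y*(1+z)/(1 + 2*z - y*(1+z))) = _
          rw [h1t]
          field_simp
          linear_combination hQ
        · show 2*z*(y*(1+z)/(1 + 2*z - y*(1+z))) + y*(1+z)/(1 + 2*z - y*(1+z)) = _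
          rw [h1t]
          field_simp
          ring
  -- the root set has exactly two elements
  obtain ⟨s, hs⟩ := IsAlgClosed.exists_pow_nat_eq (2*(x - 2)*y + (x + 2)^2 + y^2) (n := 2)
    (by norm_num)
  have hsne : s ≠ 0 := by
    intro h
    apply hdisc
    rw [← hs, h]; ring
  have hRpair : R = {(-(2-y-3*x) + s)/(2*(4-y-2*x)), (-(2-y-3*x) - s)/(2*(4-y-2*x))} := by
    ext z
    simp only [hR, Set.mem_setOf_eq, Set.mem_insert_iff, Set.mem_singleton_iff]
    constructor
    · intro hQ
      have key : (2*(4-y-2*x)*z + (2-y-3*x) - s) * (2*(4-y-2*x)*z + (2-y-3*x) + s) = 0 := by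
        linear_combination 4*(4-y-2*x)*hQ - hs
      have h2A : 2*((4:ℂ)-y-2*x) ≠ 0 := mul_ne_zero two_ne_zero hA
      rcases mul_eq_zero.1 key with h | h
      · left
        field_simp
        linear_combination h
      · right
        field_simp
        linear_combination h
    · have h2A : 2*((4:ℂ)-y-2*x) ≠ 0 := mul_ne_zero two_ne_zero hA
      rintro (rfl | rfl)
      · set r := (-(2-y-3*x) + s)/(2*(4-y-2*x)) with hr
        have h2Ar : 2*((4:ℂ)-y-2*x) * r = -(2-y-3*x) + s := by
          rw [hr]; field_simp
        have hk : 4*((4:ℂ)-y-2*x)*((4-y-2*x)*r^2 + (2-y-3*x)*r - x) = 0 := by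
          linear_combination (2*((4:ℂ)-y-2*x)*r + (2-y-3*x) + s) * h2Ar + hs
        have := mul_eq_zero.1 hk
        rcases this with h | h
        · exact absurd h (by intro hh; exact hA (by linear_combination hh/4))
        · exact h
      · set r := (-(2-y-3*x) - s)/(2*(4-y-2*x)) with hr
        have h2Ar : 2*((4:ℂ)-y-2*x) * r = -(2-y-3*x) - s := by
          rw [hr]; field_simp
        have hk : 4*((4:ℂ)-y-2*x)*((4-y-2*x)*r^2 + (2-y-3*x)*r - x) = 0 := by
          linear_combination (2*((4:ℂ)-y-2*x)*r + (2-y-3*x) - s) * h2Ar + hs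
        have := mul_eq_zero.1 hk
        rcases this with h | h
        · exact absurd h (by intro hh; exact hA (by linear_combination hh/4))
        · exact h
  have hne : (-(2-y-3*x) + s)/(2*(4-y-2*x)) ≠ (-(2-y-3*x) - s)/(2*(4-y-2*x)) := by
    intro h
    apply hsne
    have h2A : 2*((4:ℂ)-y-2*x) ≠ 0 := mul_ne_zero two_ne_zero hA
    field_simp at h
    linear_combination h/2
  calc S.ncard = (Prod.fst '' S).ncard := (Set.ncard_image_of_injOn hinj).symm
    _ = R.ncard := by rw [himg]
    _ = 2 := by rw [hRpair]; exact Set.ncard_pair hne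
end
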